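/- Let N be a positive integer, i ∈ {0, 1, …, N−1} and γ ∈ ℂ with |γ| = 1. Let K ⊂ ℂ and Ω ⊂ ℂ² ∖ {(0,0)} be compact connected sets. Assume: (a) the sequence ((a_{(n+1)N+i−1}/a_{nN+i−1})·X_{nN+i} : n ≥ 1) belongs to D̃₁(K, GL(2, ℂ)); and (b) the family {(Q̃_{nN+i}^{z,γ} : n ≥ 1) : z ∈ K} is uniformly non-degenerated. Then the limit g(α, z) = lim_{n→∞} S_{nN+i}^γ(α, z) exists for every (α, z) ∈ Ω × K, the convergence is uniform on Ω × K, and |g| is a strictly positive continuous function on Ω × K. -/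

import Mathlib

open Filter Matrix Topology

noncomputable section

/-- The operator norm of a 2×2 complex matrix (as operator on Euclidean ℂ²). -/
noncomputable def opNorm (X : Matrix (Fin 2) (Fin 2) ℂ) : ℝ :=
  ‖Matrix.toEuclideanCLM (𝕜 := ℂ) X‖

/-- Entrywise complex conjugation of a matrix. -/
def mconj (X : Matrix (Fin 2) (Fin 2) ℂ) : Matrix (Fin 2) (Fin 2) ℂ :=
  X.map (starRingEnd ℂ)

/-- Hermitian symmetrisation. -/
def symQ (X : Matrix (Fin 2) (Fin 2) ℂ) : Matrix (Fin 2) (Fin 2) ℂ :=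
  (2⁻¹ : ℂ) • (X + Xᴴ)

def Ematrix : Matrix (Fin 2) (Fin 2) ℂ := !![0, -1; 1, 0]

/-- One-step transfer matrix `B_j(z)`. -/
def Bmat (a b : ℕ → ℂ) (j : ℕ) (z : ℂ) : Matrix (Fin 2) (Fin 2) ℂ :=
  !![0, 1; -(a (j-1) / a j), (z - b j) / a j]

/-- `N`-step transfer matrix `X_n(z) = B_{n+N-1}(z) ⋯ B_n(z)`. -/
def transfer (a b : ℕ → ℂ) (N n : ℕ) (z : ℂ) : Matrix (Fin 2) (Fin 2) ℂ :=
  (((List.range N).map fun j => Bmat a b (n + j) z).reverse).prod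

/-- Generalised eigenvector associated with `z`. -/
def IsGenEigen (a b : ℕ → ℂ) (z : ℂ) (u : ℕ → ℂ) : Prop :=
  ¬(u 0 = 0 ∧ u 1 = 0) ∧
    ∀ n, 1 ≤ n → z * u n = a n * u (n+1) + b n * u n + a (n-1) * u (n-1)

/-- The twisted Stolz class `D̃₁(K, GL(2,ℂ))`. -/
def MemD1K (K : Set ℂ) (Y : ℕ → ℂ → Matrix (Fin 2) (Fin 2) ℂ) : Prop :=
  (∀ n, 1 ≤ n → ContinuousOn (Y n) K) ∧
  (∀ n, 1 ≤ n → ∀ z ∈ K, IsUnit (Y n z)) ∧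
  (∃ C : ℝ, ∀ n, 1 ≤ n → ∀ z ∈ K, opNorm (Y n z) ≤ C) ∧
  (∃ g : ℕ → ℝ, Summable g ∧ ∀ n, 1 ≤ n → ∀ z ∈ K,
      opNorm (Y (n+1) z - mconj (Y n z)) ≤ g n)

/-- The twisted Stolz class `D̃₁(ℂ)` for scalar sequences `(x_n : n ≥ 1)`. -/
def MemD1 (x : ℕ → ℂ) : Prop :=
  (∃ C : ℝ, ∀ n, 1 ≤ n → ‖x n‖ ≤ C) ∧
    Summable (fun n : ℕ => ‖x (n+2) - (starRingEnd ℂ) (x (n+1))‖)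

def MemD1N (N : ℕ) (x : ℕ → ℂ) : Prop := ∀ i < N, MemD1 (fun n => x (n*N+i))

/-- The quadratic form `v ↦ ⟨M v, v⟩`. -/
def Qform (M : Matrix (Fin 2) (Fin 2) ℂ) (v : Fin 2 → ℂ) : ℂ :=
  dotProduct (star v) (M.mulVec v)

def Qgam (a b : ℕ → ℂ) (N : ℕ) (γ : ℂ) (n : ℕ) (z : ℂ) (v : Fin 2 → ℂ) : ℂ :=
  Qform (symQ ((a (n+N-1) / (γ * (‖a (n+N-1)‖ : ℂ))) • (Ematrix * transfer a b N n z))) v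

def Qtil (a b : ℕ → ℂ) (N : ℕ) (γ : ℂ) (n : ℕ) (z : ℂ) (v : Fin 2 → ℂ) : ℂ :=
  Qform (symQ ((a (n+N-1) / (γ * (‖a (n+N-1)‖ : ℂ)) *
      (starRingEnd ℂ) (a (n+N-1) / a (n-1))) • (Ematrix * mconj (transfer a b N n z)))) v

/-- The `N`-shifted Turán determinant, expressed via a generalised eigenvector `u`. -/
def Sdet (a b : ℕ → ℂ) (N : ℕ) (γ : ℂ) (z : ℂ) (u : ℕ → ℂ) (n : ℕ) : ℂ :=
  (‖a (n+N-1)‖ : ℂ) * Qgam a b N γ n z ![u (n-1), u n]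

/-- Uniform non-degeneracy of a family of quadratic forms. -/
def UnifNonDeg (K : Set ℂ) (Q : ℕ → ℂ → (Fin 2 → ℂ) → ℂ) : Prop :=
  ∃ c₁ > (0:ℝ), ∃ c₂ > (0:ℝ), ∃ M : ℕ, 1 ≤ M ∧
    ∀ v : Fin 2 → ℂ, ∀ z ∈ K, ∀ n, M ≤ n →
      c₁ * (‖v 0‖^2 + ‖v 1‖^2) ≤ ‖Q n z v‖ ∧ ‖Q n z v‖ ≤ c₂ * (‖v 0‖^2 + ‖v 1‖^2)

def RealEntries (X : Matrix (Fin 2) (Fin 2) ℂ) : Prop := ∀ p q, (X p q).im = 0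

def discr (X : Matrix (Fin 2) (Fin 2) ℂ) : ℂ := (Matrix.trace X)^2 - 4 * X.det

/-- Periodic one-step matrix `𝔅_j(x)` (real). -/
def pB (α β : ℤ → ℝ) (j : ℤ) (x : ℝ) : Matrix (Fin 2) (Fin 2) ℝ :=
  !![0, 1; -(α (j-1) / α j), (x - β j) / α j]

/-- Periodic transfer matrix `𝔛_i(x) = 𝔅_{i+N-1}(x) ⋯ 𝔅_i(x)`. -/
def pX (α β : ℤ → ℝ) (N : ℕ) (i : ℤ) (x : ℝ) : Matrix (Fin 2) (Fin 2) ℝ :=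
  (((List.range N).map fun j => pB α β (i + j) x).reverse).prod

/-- The generalised eigenvector with initial data `α`. -/
def gev (a b : ℕ → ℂ) (z : ℂ) (α : Fin 2 → ℂ) : ℕ → ℂ
  | 0 => α 0
  | 1 => α 1
  | n+2 => ((z - b (n+1)) * gev a b z α (n+1) - a n * gev a b z α n) / a (n+1)

end

open Matrix in
lemma qform_eq_inner (M : Matrix (Fin 2) (Fin 2) ℂ) (v : Fin 2 → ℂ) :
    Qform M v = @inner ℂ _ _ ((WithLp.equiv 2 (Fin 2 → ℂ)).symm v)
      (Matrix.toEuclideanCLM (𝕜 := ℂ) M ((WithLp.equiv 2 (Fin 2 → ℂ)).symm v)) := by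
  rw [WithLp.equiv_symm_apply, Matrix.toEuclideanCLM_toLp]
  simp [Qform, PiLp.inner_apply, dotProduct, RCLike.inner_apply,
    Matrix.mulVec, Matrix.toLin'_apply, mul_comm]

open Matrix in
lemma nsq_eq (v : Fin 2 → ℂ) :
    ‖(WithLp.equiv 2 (Fin 2 → ℂ)).symm v‖ ^ 2 = ‖v 0‖^2 + ‖v 1‖^2 := by
  rw [EuclideanSpace.norm_eq]
  rw [Real.sq_sqrt (by positivity)]
  simp [Fin.sum_univ_two, WithLp.equiv_symm_apply]

open Matrix in
lemma qform_le (M : Matrix (Fin 2) (Fin 2) ℂ) (v : Fin 2 → ℂ) :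
    ‖Qform M v‖ ≤ opNorm M * (‖v 0‖^2 + ‖v 1‖^2) := by
  rw [qform_eq_inner]
  set x := (WithLp.equiv 2 (Fin 2 → ℂ)).symm v
  calc ‖@inner ℂ _ _ x (Matrix.toEuclideanCLM (𝕜 := ℂ) M x)‖
      ≤ ‖x‖ * ‖Matrix.toEuclideanCLM (𝕜 := ℂ) M x‖ := norm_inner_le_norm _ _
    _ ≤ ‖x‖ * (opNorm M * ‖x‖) := by
        gcongr; exact (Matrix.toEuclideanCLM (𝕜 := ℂ) M).le_opNorm x
    _ = opNorm M * ‖x‖^2 := by ring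
    _ = _ := by rw [nsq_eq]
open Matrix
open scoped Matrix.Norms.L2Operator

lemma opNorm_eq (A : Matrix (Fin 2) (Fin 2) ℂ) : opNorm A = ‖A‖ := rfl

lemma opNorm_symQ_le (A : Matrix (Fin 2) (Fin 2) ℂ) : opNorm (symQ A) ≤ opNorm A := by
  simp only [opNorm_eq, symQ]
  calc ‖(2⁻¹ : ℂ) • (A + Aᴴ)‖ = ‖(2⁻¹:ℂ)‖ * ‖A + Aᴴ‖ := norm_smul _ _
    _ ≤ ‖(2⁻¹:ℂ)‖ * (‖A‖ + ‖Aᴴ‖) := by gcongr; exact norm_add_le _ _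
    _ = ‖A‖ := by rw [Matrix.l2_opNorm_conjTranspose]; simp; ring

lemma opNorm_E_le : opNorm Ematrix ≤ 1 := by
  unfold opNorm
  apply ContinuousLinearMap.opNorm_le_bound _ zero_le_one
  intro x
  rw [one_mul]
  rw [EuclideanSpace.norm_eq, EuclideanSpace.norm_eq]
  apply le_of_eq
  congr 1
  have hx : ∀ j, (Matrix.toEuclideanCLM (𝕜 := ℂ) Ematrix x) j
      = (Ematrix.mulVec (fun k => x k)) j := fun _ => rfl
  rw [Fin.sum_univ_two, Fin.sum_univ_two, hx, hx]
  simp [Ematrix, Matrix.mulVec, dotProduct, Fin.sum_univ_two]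
  ring

lemma Qform_sub (A B : Matrix (Fin 2) (Fin 2) ℂ) (v : Fin 2 → ℂ) :
    Qform (A - B) v = Qform A v - Qform B v := by
  simp [Qform, Matrix.sub_mulVec, dotProduct_sub]; ring

lemma Qform_smul (c : ℂ) (A : Matrix (Fin 2) (Fin 2) ℂ) (v : Fin 2 → ℂ) :
    Qform (c • A) v = c * Qform A v := by
  simp [Qform, Matrix.smul_mulVec, dotProduct_smul, smul_eq_mul]; ring

lemma Qform_mulVec (M X : Matrix (Fin 2) (Fin 2) ℂ) (v : Fin 2 → ℂ) :
    Qform M (X.mulVec v) = Qform (Xᴴ * M * X) v := by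
  unfold Qform
  rw [Matrix.star_mulVec, Matrix.mulVec_mulVec, Matrix.dotProduct_mulVec,
    Matrix.dotProduct_mulVec, Matrix.vecMul_vecMul, Matrix.mul_assoc]

lemma symQ_sub (A B : Matrix (Fin 2) (Fin 2) ℂ) : symQ (A - B) = symQ A - symQ B := by
  unfold symQ
  rw [Matrix.conjTranspose_sub, ← smul_sub]
  congr 1
  abel

lemma symQ_sandwich (A X : Matrix (Fin 2) (Fin 2) ℂ) :
    Xᴴ * symQ A * X = symQ (Xᴴ * A * X) := by
  unfold symQ
  rw [Matrix.conjTranspose_mul, Matrix.conjTranspose_mul, Matrix.conjTranspose_conjTranspose]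
  rw [Matrix.mul_smul, Matrix.smul_mul]
  congr 1
  rw [Matrix.mul_add, Matrix.add_mul, Matrix.mul_assoc, Matrix.mul_assoc]

lemma symQ_smul_real (r : ℝ) (A : Matrix (Fin 2) (Fin 2) ℂ) :
    symQ ((r : ℂ) • A) = (r : ℂ) • symQ A := by
  unfold symQ
  rw [Matrix.conjTranspose_smul]
  have hr : star ((r:ℝ) : ℂ) = ((r:ℝ) : ℂ) := by
    simp [Complex.star_def, Complex.conj_ofReal]
  rw [hr, ← smul_add, smul_comm]

lemma detE_identity (X : Matrix (Fin 2) (Fin 2) ℂ) :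
    Xᴴ * Ematrix * mconj X = ((starRingEnd ℂ) X.det) • Ematrix := by
  ext p q
  fin_cases p <;> fin_cases q <;>
    simp [Ematrix, mconj, Matrix.mul_apply, Fin.sum_univ_two, Matrix.det_fin_two,
      Matrix.conjTranspose_apply, Matrix.map_apply, _root_.map_mul, _root_.map_sub] <;> ring
lemma transfer_zero (a b : ℕ → ℂ) (n : ℕ) (z : ℂ) : transfer a b 0 n z = 1 := by
  simp [transfer]

lemma transfer_succ (a b : ℕ → ℂ) (N n : ℕ) (z : ℂ) :
    transfer a b (N+1) n z = Bmat a b (n+N) z * transfer a b N n z := by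
  unfold transfer
  rw [List.range_succ, List.map_append, List.reverse_append]
  simp

lemma det_Bmat (a b : ℕ → ℂ) (j : ℕ) (z : ℂ) :
    (Bmat a b j z).det = a (j-1) / a j := by
  simp [Bmat, Matrix.det_fin_two]

lemma det_transfer (a b : ℕ → ℂ) (ha : ∀ n, a n ≠ 0) (N n : ℕ) (hn : 1 ≤ n) (z : ℂ) :
    (transfer a b N n z).det = a (n-1) / a (n+N-1) := by
  have key : ∀ N : ℕ, (transfer a b N n z).det = a (n-1) / a (n-1+N) := by
    intro N
    induction N with
    | zero => simp [transfer_zero, div_self (ha (n-1))]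
    | succ N ih =>
      rw [transfer_succ, Matrix.det_mul, ih, det_Bmat]
      have h1 : n + N - 1 = n - 1 + N := by omega
      have h2 : n - 1 + (N+1) = n + N := by omega
      rw [h1, h2, div_mul_div_comm, mul_comm (a (n+N)) (a (n-1+N))]
      exact mul_div_mul_left _ _ (ha (n-1+N))
  rw [key N]
  congr 2
  omega

lemma Bmat_mulVec (a b : ℕ → ℂ) (ha : ∀ n, a n ≠ 0) (z : ℂ) (α : Fin 2 → ℂ)
    (n : ℕ) (hn : 1 ≤ n) :
    (Bmat a b n z).mulVec ![gev a b z α (n-1), gev a b z α n]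
      = ![gev a b z α n, gev a b z α (n+1)] := by
  obtain ⟨k, rfl⟩ : ∃ k, n = k + 1 := ⟨n - 1, by omega⟩
  have hrec : gev a b z α (k+2)
      = ((z - b (k+1)) * gev a b z α (k+1) - a k * gev a b z α k) / a (k+1) := rfl
  funext p
  fin_cases p
  · simp [Bmat, Matrix.mulVec, dotProduct, Fin.sum_univ_two]
  · show (Bmat a b (k+1) z).mulVec _ 1 = _
    simp only [Bmat, Matrix.mulVec, dotProduct, Fin.sum_univ_two]
    have h1 : k + 1 - 1 = k := by omega
    simp only [h1, Matrix.cons_val', Matrix.cons_val_zero, Matrix.cons_val_one,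
      Matrix.head_cons, Matrix.head_fin_const, Matrix.cons_val_fin_one, Matrix.empty_val']
    show -(a k / a (k+1)) * gev a b z α k + (z - b (k+1)) / a (k+1) * gev a b z α (k+1)
        = gev a b z α (k+2)
    rw [hrec]
    field_simp
    ring
lemma transfer_mulVec (a b : ℕ → ℂ) (ha : ∀ n, a n ≠ 0) (N : ℕ) (z : ℂ) (α : Fin 2 → ℂ)
    (n : ℕ) (hn : 1 ≤ n) :
    (transfer a b N n z).mulVec ![gev a b z α (n-1), gev a b z α n]
      = ![gev a b z α (n+N-1), gev a b z α (n+N)] := by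
  induction N with
  | zero =>
    rw [transfer_zero]
    simp [Matrix.one_mulVec]
  | succ N ih =>
    rw [transfer_succ, ← Matrix.mulVec_mulVec, ih]
    rw [show n + (N+1) - 1 = n + N from by omega, show n + (N+1) = n + N + 1 from by omega]
    exact Bmat_mulVec a b ha z α (n+N) (by omega)

lemma gev_pair_ne (a b : ℕ → ℂ) (ha : ∀ n, a n ≠ 0) (z : ℂ) (α : Fin 2 → ℂ)
    (hα : α ≠ 0) (n : ℕ) (hn : 1 ≤ n) :
    ¬(gev a b z α (n-1) = 0 ∧ gev a b z α n = 0) := by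
  induction n with
  | zero => omega
  | succ n ih =>
    rcases Nat.eq_or_lt_of_le hn with h1 | h1
    · obtain rfl : n = 0 := by omega
      rintro ⟨h0, h1'⟩
      apply hα
      funext p
      fin_cases p
      · simpa [gev] using h0
      · simpa [gev] using h1'
    · rintro ⟨h0, h1'⟩
      have hn1 : 1 ≤ n := by omega
      apply ih hn1
      obtain ⟨k, rfl⟩ : ∃ k, n = k + 1 := ⟨n - 1, by omega⟩
      have hrec : gev a b z α (k+2)
          = ((z - b (k+1)) * gev a b z α (k+1) - a k * gev a b z α k) / a (k+1) := rfl
      simp only [Nat.add_sub_cancel] at h0 ⊢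
      refine ⟨?_, h0⟩
      rw [hrec, h0] at h1'
      have := (div_eq_zero_iff.mp h1').resolve_right (ha (k+1))
      simpa [ha k] using this

lemma cont_gev (a b : ℕ → ℂ) (n : ℕ) :
    Continuous fun p : (Fin 2 → ℂ) × ℂ => gev a b p.2 p.1 n := by
  induction n using Nat.twoStepInduction with
  | zero => exact (continuous_apply 0).comp continuous_fst
  | one => exact (continuous_apply 1).comp continuous_fst
  | more n ih1 ih2 =>
    show Continuous fun p : (Fin 2 → ℂ) × ℂ =>
      ((p.2 - b (n+1)) * gev a b p.2 p.1 (n+1) - a n * gev a b p.2 p.1 n) / a (n+1)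
    exact (((continuous_snd.sub continuous_const).mul ih2).sub
      (continuous_const.mul ih1)).div_const _

lemma cont_transfer (a b : ℕ → ℂ) (N n : ℕ) :
    Continuous fun z : ℂ => transfer a b N n z := by
  induction N with
  | zero => simpa [transfer_zero] using continuous_const
  | succ N ih =>
    have hB : Continuous fun z : ℂ => Bmat a b (n+N) z := by
      apply continuous_matrix
      intro p q
      fin_cases p <;> fin_cases q <;>
        simp [Bmat] <;>
        fun_prop
    simp only [transfer_succ]
    exact hB.matrix_mul ih
open scoped Matrix.Norms.L2Operator in
lemma opNorm_qsmul_le (q : ℂ) (D : Matrix (Fin 2) (Fin 2) ℂ) :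
    opNorm (q • (Ematrix * D)) ≤ ‖q‖ * opNorm D := by
  rw [opNorm_eq, norm_smul]
  have h2 : ‖Ematrix‖ ≤ 1 := opNorm_E_le
  have h3 : ‖Ematrix * D‖ ≤ ‖D‖ :=
    le_trans (Matrix.l2_opNorm_mul _ _) (by nlinarith [norm_nonneg (D : Matrix (Fin 2) (Fin 2) ℂ)])
  exact mul_le_mul_of_nonneg_left h3 (norm_nonneg q)

lemma Qform_symQ_bound (q : ℂ) (D : Matrix (Fin 2) (Fin 2) ℂ) (v : Fin 2 → ℂ) :
    ‖Qform (symQ (q • (Ematrix * D))) v‖ ≤ ‖q‖ * opNorm D * (‖v 0‖^2 + ‖v 1‖^2) := by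
  calc ‖Qform (symQ (q • (Ematrix * D))) v‖
      ≤ opNorm (symQ (q • (Ematrix * D))) * (‖v 0‖^2 + ‖v 1‖^2) := qform_le _ _
    _ ≤ (‖q‖ * opNorm D) * (‖v 0‖^2 + ‖v 1‖^2) :=
        mul_le_mul_of_nonneg_right ((opNorm_symQ_le _).trans (opNorm_qsmul_le q D))
          (by positivity)

lemma Qform_symQ_sub (q : ℂ) (A B : Matrix (Fin 2) (Fin 2) ℂ) (v : Fin 2 → ℂ) :
    Qform (symQ (q • (Ematrix * A))) v - Qform (symQ (q • (Ematrix * B))) v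
      = Qform (symQ (q • (Ematrix * (A - B)))) v := by
  rw [Matrix.mul_sub, smul_sub, symQ_sub, Qform_sub]

lemma norm_mul_Qform (r : ℝ) (c : ℂ) (M : Matrix (Fin 2) (Fin 2) ℂ) (v : Fin 2 → ℂ) :
    ((r:ℝ):ℂ) * Qform (symQ (c • M)) v = Qform (symQ ((((r:ℝ):ℂ) * c) • M)) v := by
  rw [mul_smul, symQ_smul_real, Qform_smul]

lemma mconj_smul (s : ℂ) (X : Matrix (Fin 2) (Fin 2) ℂ) :
    mconj (s • X) = (starRingEnd ℂ s) • mconj X := by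
  ext p q
  simp [mconj, Matrix.map_apply, _root_.map_mul]

lemma Sdet_eq_Qtil (a b : ℕ → ℂ) (ha : ∀ n, a n ≠ 0) (N : ℕ) (γ : ℂ)
    (z : ℂ) (α : Fin 2 → ℂ) (n : ℕ) (hn : 1 ≤ n) :
    Sdet a b N γ z (gev a b z α) n
      = (‖a (n+N-1)‖ : ℂ)
          * Qtil a b N γ n z ![gev a b z α (n+N-1), gev a b z α (n+N)] := by
  have hX := transfer_mulVec a b ha N z α n hn
  have hmat : (transfer a b N n z)ᴴ *
        ((a (n+N-1) / (γ * (‖a (n+N-1)‖:ℂ)) * (starRingEnd ℂ) (a (n+N-1) / a (n-1))) •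
          (Ematrix * mconj (transfer a b N n z))) * (transfer a b N n z)
      = (a (n+N-1) / (γ * (‖a (n+N-1)‖:ℂ))) • (Ematrix * transfer a b N n z) := by
    set X := transfer a b N n z with hXdef
    rw [Matrix.mul_smul, Matrix.smul_mul]
    rw [show Xᴴ * (Ematrix * mconj X) * X = (Xᴴ * Ematrix * mconj X) * X from by
      rw [Matrix.mul_assoc Xᴴ Ematrix (mconj X)]]
    rw [detE_identity, Matrix.smul_mul, smul_smul, det_transfer a b ha N n hn z]
    have hone : (a (n+N-1) / a (n-1)) * (a (n-1) / a (n+N-1)) = 1 := by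
      rw [div_mul_div_comm, mul_comm (a (n+N-1)) (a (n-1))]
      exact div_self (mul_ne_zero (ha _) (ha _))
    rw [mul_assoc, ← _root_.map_mul, hone, RingHom.map_one, mul_one]
  unfold Sdet Qtil Qgam
  rw [← hX, Qform_mulVec, symQ_sandwich, hmat]

lemma Sdet_cur_repr (a b : ℕ → ℂ) (ha : ∀ n, a n ≠ 0) (N : ℕ) (γ : ℂ) (hγ : γ ≠ 0)
    (z : ℂ) (α : Fin 2 → ℂ) (n : ℕ) (hn : 1 ≤ n) :
    Sdet a b N γ z (gev a b z α) n
      = Qform (symQ ((a (n+N-1)/γ) •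
          (Ematrix * mconj ((a (n+N-1) / a (n-1)) • transfer a b N n z))))
          ![gev a b z α (n+N-1), gev a b z α (n+N)] := by
  rw [Sdet_eq_Qtil a b ha N γ z α n hn]
  unfold Qtil
  rw [norm_mul_Qform]
  rw [mconj_smul, Matrix.mul_smul, smul_smul]
  have hna : (‖a (n+N-1)‖ : ℂ) ≠ 0 := by
    simpa using (norm_ne_zero_iff.mpr (ha (n+N-1)))
  have hs : ((‖a (n+N-1)‖:ℂ)) * (a (n+N-1) / (γ * (‖a (n+N-1)‖:ℂ))) = a (n+N-1)/γ := by
    rw [mul_div_assoc', mul_comm γ ((‖a (n+N-1)‖:ℂ))]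
    exact mul_div_mul_left _ _ hna
  rw [← mul_assoc, hs]
lemma Sdet_succ_repr (a b : ℕ → ℂ) (ha : ∀ n, a n ≠ 0) (N : ℕ) (γ : ℂ) (hγ : γ ≠ 0)
    (z : ℂ) (α : Fin 2 → ℂ) (n : ℕ) :
    Sdet a b N γ z (gev a b z α) (n+N)
      = Qform (symQ ((a (n+N-1)/γ) •
          (Ematrix * ((a (n+N+N-1) / a (n+N-1)) • transfer a b N (n+N) z))))
          ![gev a b z α (n+N-1), gev a b z α (n+N)] := by
  unfold Sdet Qgam
  rw [norm_mul_Qform]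
  have hna : (‖a (n+N+N-1)‖ : ℂ) ≠ 0 := by
    simpa using (norm_ne_zero_iff.mpr (ha (n+N+N-1)))
  have hs : ((‖a (n+N+N-1)‖:ℂ)) * (a (n+N+N-1) / (γ * (‖a (n+N+N-1)‖:ℂ)))
      = a (n+N+N-1)/γ := by
    rw [mul_div_assoc', mul_comm γ ((‖a (n+N+N-1)‖:ℂ))]
    exact mul_div_mul_left _ _ hna
  rw [hs, Matrix.mul_smul, smul_smul]
  have hs2 : (a (n+N-1)/γ) * (a (n+N+N-1) / a (n+N-1)) = a (n+N+N-1)/γ := by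
    rw [div_mul_div_comm, mul_comm (a (n+N-1)) (a (n+N+N-1))]
    exact mul_div_mul_right _ _ (ha (n+N-1))
  rw [hs2]

lemma Sdet_diff_bound (a b : ℕ → ℂ) (ha : ∀ n, a n ≠ 0) (N : ℕ) (γ : ℂ) (hγ1 : ‖γ‖ = 1)
    (z : ℂ) (α : Fin 2 → ℂ) (n : ℕ) (hn : 1 ≤ n) :
    ‖Sdet a b N γ z (gev a b z α) (n+N) - Sdet a b N γ z (gev a b z α) n‖
      ≤ ‖a (n+N-1)‖ *
          opNorm (((a (n+N+N-1) / a (n+N-1)) • transfer a b N (n+N) z)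
            - mconj ((a (n+N-1) / a (n-1)) • transfer a b N n z)) *
          (‖gev a b z α (n+N-1)‖^2 + ‖gev a b z α (n+N)‖^2) := by
  have hγ : γ ≠ 0 := by intro h; rw [h] at hγ1; simp at hγ1
  rw [Sdet_succ_repr a b ha N γ hγ z α n, Sdet_cur_repr a b ha N γ hγ z α n hn,
    Qform_symQ_sub]
  have hb := Qform_symQ_bound (a (n+N-1)/γ)
    (((a (n+N+N-1) / a (n+N-1)) • transfer a b N (n+N) z)
      - mconj ((a (n+N-1) / a (n-1)) • transfer a b N n z))
    ![gev a b z α (n+N-1), gev a b z α (n+N)]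
  rw [norm_div, hγ1, div_one] at hb
  simpa using hb

lemma Sdet_norm_eq (a b : ℕ → ℂ) (ha : ∀ n, a n ≠ 0) (N : ℕ) (γ : ℂ)
    (z : ℂ) (α : Fin 2 → ℂ) (n : ℕ) (hn : 1 ≤ n) :
    ‖Sdet a b N γ z (gev a b z α) n‖
      = ‖a (n+N-1)‖ * ‖Qtil a b N γ n z
          ![gev a b z α (n+N-1), gev a b z α (n+N)]‖ := by
  rw [Sdet_eq_Qtil a b ha N γ z α n hn, norm_mul, Complex.norm_real, norm_norm]

lemma cont_Sdet (a b : ℕ → ℂ) (N : ℕ) (γ : ℂ) (n : ℕ) :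
    Continuous fun p : (Fin 2 → ℂ) × ℂ => Sdet a b N γ p.2 (gev a b p.2 p.1) n := by
  unfold Sdet Qgam Qform
  apply Continuous.mul continuous_const
  have hM : Continuous fun p : (Fin 2 → ℂ) × ℂ =>
      symQ ((a (n+N-1) / (γ * (‖a (n+N-1)‖ : ℂ))) • (Ematrix * transfer a b N n p.2)) := by
    unfold symQ
    apply Continuous.fun_const_smul
    apply Continuous.add
    · exact (continuous_const.matrix_mul ((cont_transfer a b N n).comp continuous_snd)).fun_const_smul _
    · exact ((continuous_const.matrix_mul ((cont_transfer a b N n).comp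
        continuous_snd)).fun_const_smul _).matrix_conjTranspose
  have hv : Continuous fun p : (Fin 2 → ℂ) × ℂ =>
      (![gev a b p.2 p.1 (n-1), gev a b p.2 p.1 n] : Fin 2 → ℂ) := by
    apply continuous_pi
    intro j
    fin_cases j
    · simpa using cont_gev a b (n-1)
    · simpa using cont_gev a b n
  exact (hv.star).dotProduct (hM.matrix_mulVec hv)
open Filter in
lemma tuo_shift {X : Type*} {F : ℕ → X → ℂ} {g : X → ℂ} {s : Set X} (M : ℕ)
    (h : TendstoUniformlyOn (fun m x => F (M + m) x) g atTop s) :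
    TendstoUniformlyOn F g atTop s := by
  rw [Metric.tendstoUniformlyOn_iff] at h ⊢
  intro ε hε
  obtain ⟨K0, hK0⟩ := eventually_atTop.1 (h ε hε)
  rw [eventually_atTop]
  refine ⟨M + K0, fun n hn x hx => ?_⟩
  have := hK0 (n - M) (by omega) x hx
  rwa [show M + (n - M) = n from by omega] at this

open Filter in
lemma tuo_const_add {X : Type*} {F : ℕ → X → ℂ} {g c : X → ℂ} {s : Set X}
    (h : TendstoUniformlyOn F g atTop s) :
    TendstoUniformlyOn (fun m x => c x + F m x) (fun x => c x + g x) atTop s := by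
  rw [Metric.tendstoUniformlyOn_iff] at h ⊢
  intro ε hε
  filter_upwards [h ε hε] with n hn x hx
  simpa [dist_add_left] using hn x hx
open Filter Matrix Topology in
/-- Theorem 2: uniform convergence of the shifted Turán determinants to a
function whose absolute value is continuous and strictly positive. -/
theorem statement9
    (a b : ℕ → ℂ) (ha : ∀ n, a n ≠ 0)
    (N : ℕ) (hN : 1 ≤ N) (i : ℕ) (hi : i < N)
    (γ : ℂ) (hγ : ‖γ‖ = 1)
    (K : Set ℂ) (hK : IsCompact K) (hKconn : IsConnected K)
    (Ω : Set (Fin 2 → ℂ)) (hΩ : IsCompact Ω) (hΩconn : IsConnected Ω)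
    (hΩ0 : ∀ α ∈ Ω, α ≠ 0)
    (hD1 : MemD1K K
      (fun n z => (a ((n+1)*N+i-1) / a (n*N+i-1)) • transfer a b N (n*N+i) z))
    (hQ : UnifNonDeg K (fun n z v => Qtil a b N γ (n*N+i) z v)) :
    ∃ g : (Fin 2 → ℂ) × ℂ → ℂ,
      TendstoUniformlyOn
        (fun n p => Sdet a b N γ p.2 (gev a b p.2 p.1) (n*N+i)) g atTop (Ω ×ˢ K) ∧
      ContinuousOn (fun p => ‖g p‖) (Ω ×ˢ K) ∧
      ∀ p ∈ Ω ×ˢ K, 0 < ‖g p‖ := by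
  classical
  obtain ⟨hYcont, hYunit, hYbdd, gseq, hgsum, hgbd⟩ := hD1
  obtain ⟨c₁, hc₁, c₂, hc₂, M0, hM01, hQbd⟩ := hQ
  set s : Set ((Fin 2 → ℂ) × ℂ) := Ω ×ˢ K with hs
  set t : ℕ → ((Fin 2 → ℂ) × ℂ) → ℂ :=
    fun m p => Sdet a b N γ p.2 (gev a b p.2 p.1) (m*N+i) with ht
  set r : ℕ → ℝ := fun m => max (gseq m / c₁) 0 with hrdef
  have hr0 : ∀ m, 0 ≤ r m := fun m => le_max_right _ _
  have hrsum : Summable r := by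
    apply Summable.of_nonneg_of_le hr0 (fun m => ?_) ((hgsum.div_const c₁).abs)
    exact max_le (le_abs_self _) (abs_nonneg _)
  -- the key one-step estimate
  have hstep : ∀ m, M0 ≤ m → ∀ p ∈ s, ‖t (m+1) p - t m p‖ ≤ r m * ‖t m p‖ := by
    intro m hm p hp
    obtain ⟨hp1, hp2⟩ := hp
    have hm1 : 1 ≤ m := le_trans hM01 hm
    have hmN : 1 ≤ m * N := by
      have := Nat.mul_le_mul hm1 hN
      omega
    have hn1 : 1 ≤ m*N+i := by omega
    have e1 : (m+1+1)*N+i-1 = m*N+i+N+N-1 := by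
      rw [show (m+1+1)*N = m*N+N+N from by ring]; omega
    have e2 : (m+1)*N+i-1 = m*N+i+N-1 := by
      rw [show (m+1)*N = m*N+N from by ring]; omega
    have e3 : (m+1)*N+i = m*N+i+N := by ring
    have ht1 : t (m+1) p = Sdet a b N γ p.2 (gev a b p.2 p.1) (m*N+i+N) := by
      simp only [ht]
      rw [e3]
    have hop := hgbd m hm1 p.2 hp2
    dsimp only at hop
    rw [e1, e2, e3] at hop
    have hg0 : 0 ≤ gseq m := le_trans (norm_nonneg _) hop
    have hdb := Sdet_diff_bound a b ha N γ hγ p.2 p.1 (m*N+i) hn1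
    rw [show m*N+i+N+N-1 = m*N+i+N+N-1 from rfl] at hdb
    have hqlow := (hQbd (![gev a b p.2 p.1 (m*N+i+N-1), gev a b p.2 p.1 (m*N+i+N)])
      p.2 hp2 m hm).1
    simp only [Matrix.cons_val_zero, Matrix.cons_val_one, Matrix.head_cons] at hqlow
    have heqn := Sdet_norm_eq a b ha N γ p.2 p.1 (m*N+i) hn1
    have hlowm : ‖a (m*N+i+N-1)‖ *
        (c₁ * (‖gev a b p.2 p.1 (m*N+i+N-1)‖^2 + ‖gev a b p.2 p.1 (m*N+i+N)‖^2))
        ≤ ‖t m p‖ := by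
      simp only [ht]
      rw [heqn]
      exact mul_le_mul_of_nonneg_left hqlow (norm_nonneg _)
    set nsq : ℝ := ‖gev a b p.2 p.1 (m*N+i+N-1)‖^2 + ‖gev a b p.2 p.1 (m*N+i+N)‖^2
      with hnsqdef
    have hnsq0 : 0 ≤ nsq := by rw [hnsqdef]; positivity
    have hA0 : (0:ℝ) ≤ ‖a (m*N+i+N-1)‖ := norm_nonneg _
    calc ‖t (m+1) p - t m p‖
        = ‖Sdet a b N γ p.2 (gev a b p.2 p.1) (m*N+i+N)
            - Sdet a b N γ p.2 (gev a b p.2 p.1) (m*N+i)‖ := by rw [ht1]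
      _ ≤ ‖a (m*N+i+N-1)‖ * opNorm ((a (m*N+i+N+N-1) / a (m*N+i+N-1)) •
            transfer a b N (m*N+i+N) p.2
            - mconj ((a (m*N+i+N-1) / a (m*N+i-1)) • transfer a b N (m*N+i) p.2)) * nsq :=
          hdb
      _ ≤ ‖a (m*N+i+N-1)‖ * gseq m * nsq := by
          apply mul_le_mul_of_nonneg_right _ hnsq0
          exact mul_le_mul_of_nonneg_left hop hA0
      _ = (gseq m / c₁) * (‖a (m*N+i+N-1)‖ * (c₁ * nsq)) := by
          field_simp
      _ ≤ (gseq m / c₁) * ‖t m p‖ :=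
          mul_le_mul_of_nonneg_left hlowm (div_nonneg hg0 hc₁.le)
      _ ≤ r m * ‖t m p‖ :=
          mul_le_mul_of_nonneg_right (le_max_left _ _) (norm_nonneg _)
  -- bound at M0
  obtain ⟨B0', hB0'⟩ := (hΩ.prod hK).exists_bound_of_continuousOn
    ((cont_Sdet a b N γ (M0*N+i)).continuousOn)
  set B0 : ℝ := max B0' 0 with hB0def
  have hB00 : 0 ≤ B0 := le_max_right _ _
  have hB0 : ∀ p ∈ s, ‖t M0 p‖ ≤ B0 := fun p hp =>
    le_trans (hB0' p hp) (le_max_left _ _)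
  -- uniform bound for m ≥ M0
  have hub : ∀ p ∈ s, ∀ m, ‖t (M0 + m) p‖
      ≤ B0 * Real.exp (∑ k ∈ Finset.range m, r (M0 + k)) := by
    intro p hp m
    induction m with
    | zero => simpa using hB0 p hp
    | succ m ihm =>
      have hs1 := hstep (M0 + m) (by omega) p hp
      have htri : ‖t (M0+m+1) p‖ ≤ ‖t (M0+m) p‖ + ‖t (M0+m+1) p - t (M0+m) p‖ := by
        have := norm_add_le (t (M0+m) p) (t (M0+m+1) p - t (M0+m) p)
        simpa using this
      have h2 : ‖t (M0+m+1) p‖ ≤ (1 + r (M0+m)) * ‖t (M0+m) p‖ := by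
        nlinarith [norm_nonneg (t (M0+m) p)]
      have h3 : (1 + r (M0+m)) ≤ Real.exp (r (M0+m)) := by
        have := Real.add_one_le_exp (r (M0+m)); linarith
      calc ‖t (M0+(m+1)) p‖ = ‖t (M0+m+1) p‖ := by
            rw [show M0+(m+1) = M0+m+1 from by omega]
        _ ≤ (1 + r (M0+m)) * ‖t (M0+m) p‖ := h2
        _ ≤ Real.exp (r (M0+m)) * (B0 * Real.exp (∑ k ∈ Finset.range m, r (M0+k))) := by
            apply mul_le_mul h3 ihm (norm_nonneg _) (le_of_lt (Real.exp_pos _))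
        _ = B0 * Real.exp (∑ k ∈ Finset.range (m+1), r (M0+k)) := by
            rw [Finset.sum_range_succ, Real.exp_add]; ring
  have hTsum : Summable (fun k => r (M0 + k)) := by
    have := (summable_nat_add_iff M0).2 hrsum
    exact this.congr (fun k => by rw [Nat.add_comm])
  set T : ℝ := ∑' k, r (M0 + k) with hT
  have hpartial : ∀ m, ∑ k ∈ Finset.range m, r (M0+k) ≤ T := fun m =>
    Summable.sum_le_tsum _ (fun k _ => hr0 _) hTsum
  set B : ℝ := B0 * Real.exp T with hB
  have hBub : ∀ p ∈ s, ∀ m, ‖t (M0+m) p‖ ≤ B := by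
    intro p hp m
    refine le_trans (hub p hp m) ?_
    exact mul_le_mul_of_nonneg_left (Real.exp_le_exp.2 (hpartial m)) hB00
  -- telescoping series
  set d : ℕ → ((Fin 2 → ℂ) × ℂ) → ℂ := fun k p => t (M0+k+1) p - t (M0+k) p with hd
  have hdbd : ∀ k (p : (Fin 2 → ℂ) × ℂ), p ∈ s → ‖d k p‖ ≤ r (M0+k) * B := by
    intro k p hp
    calc ‖d k p‖ ≤ r (M0+k) * ‖t (M0+k) p‖ := hstep (M0+k) (by omega) p hp
      _ ≤ r (M0+k) * B := mul_le_mul_of_nonneg_left (hBub p hp k) (hr0 _)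
  have husum : Summable (fun k => r (M0+k) * B) := hTsum.mul_right B
  have huni0 := tendstoUniformlyOn_tsum_nat husum hdbd
  set g : ((Fin 2 → ℂ) × ℂ) → ℂ := fun p => t M0 p + ∑' k, d k p with hg
  have htel : ∀ m (p : (Fin 2 → ℂ) × ℂ),
      t (M0+m) p = t M0 p + ∑ k ∈ Finset.range m, d k p := by
    intro m p
    induction m with
    | zero => simp
    | succ m ihm =>
      rw [Finset.sum_range_succ, show M0+(m+1) = (M0+m)+1 from by omega, ← add_assoc,
        ← ihm]
      simp [hd]
  have huni1 : TendstoUniformlyOn (fun m p => t (M0+m) p) g atTop s := by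
    have h0 := tuo_const_add (c := fun p => t M0 p) huni0
    apply h0.congr
    filter_upwards with m p hp
    exact (htel m p).symm
  have huni : TendstoUniformlyOn t g atTop s := tuo_shift M0 huni1
  refine ⟨g, huni, ?_, ?_⟩
  · have hc : ContinuousOn g s := huni.continuousOn
      (Filter.Eventually.of_forall fun m => (cont_Sdet a b N γ (m*N+i)).continuousOn).frequently
    exact hc.norm
  · intro p hp
    obtain ⟨hp1, hp2⟩ := hp
    have hps : CauchySeq (fun j => ∑ k ∈ Finset.range j, r k) :=
      hrsum.hasSum.tendsto_sum_nat.cauchySeq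
    obtain ⟨M1', hM1'⟩ := Metric.cauchySeq_iff'.1 hps (1/2) (by norm_num)
    set M1 : ℕ := max M1' M0 with hM1def
    have hM1M0 : M0 ≤ M1 := le_max_right _ _
    have htail : ∀ m, M1 ≤ m → ∑ k ∈ Finset.Ico M1 m, r k ≤ 1/2 := by
      intro m hm
      have hsub : Finset.Ico M1 m ⊆ Finset.Ico M1' m :=
        Finset.Ico_subset_Ico (le_max_left _ _) le_rfl
      have h1 : ∑ k ∈ Finset.Ico M1 m, r k ≤ ∑ k ∈ Finset.Ico M1' m, r k :=
        Finset.sum_le_sum_of_subset_of_nonneg hsub (fun k _ _ => hr0 k)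
      have hle : M1' ≤ m := le_trans (le_max_left _ _) hm
      have h2 : ∑ k ∈ Finset.Ico M1' m, r k
          = (∑ k ∈ Finset.range m, r k) - (∑ k ∈ Finset.range M1', r k) :=
        Finset.sum_Ico_eq_sub _ hle
      have h3 := hM1' m hle
      rw [Real.dist_eq] at h3
      have h4 := le_abs_self ((∑ k ∈ Finset.range m, r k) - (∑ k ∈ Finset.range M1', r k))
      linarith
    have hlb : ∀ m, M1 ≤ m →
        (1 - ∑ k ∈ Finset.Ico M1 m, r k) * ‖t M1 p‖ ≤ ‖t m p‖ := by
      intro m hm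
      induction m, hm using Nat.le_induction with
      | base => simp
      | succ m hm ihm =>
        have hst := hstep m (le_trans hM1M0 hm) p ⟨hp1, hp2⟩
        have htri : ‖t m p‖ - ‖t (m+1) p - t m p‖ ≤ ‖t (m+1) p‖ := by
          have h5 := norm_sub_norm_le (t m p) (t (m+1) p)
          have h6 : ‖t m p - t (m+1) p‖ = ‖t (m+1) p - t m p‖ := norm_sub_rev _ _
          linarith
        have hrm : r m ≤ 1/2 := by
          have hmem : m ∈ Finset.Ico M1 (m+1) := by
            simp only [Finset.mem_Ico]; omega
          have h7 := Finset.single_le_sum (f := r) (fun k _ => hr0 k) hmem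
          linarith [htail (m+1) (by omega)]
        have hS1 : ∑ k ∈ Finset.Ico M1 m, r k ≤ 1/2 := htail m hm
        have hS0 : 0 ≤ ∑ k ∈ Finset.Ico M1 m, r k :=
          Finset.sum_nonneg (fun k _ => hr0 k)
        rw [Finset.sum_Ico_succ_top hm]
        have h8 : (0:ℝ) ≤ 1 - r m := by linarith
        have h9 : (1 - r m) * ((1 - ∑ k ∈ Finset.Ico M1 m, r k) * ‖t M1 p‖)
            ≤ (1 - r m) * ‖t m p‖ := mul_le_mul_of_nonneg_left ihm h8
        nlinarith [norm_nonneg (t M1 p), norm_nonneg (t m p), hr0 m,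
          mul_nonneg (mul_nonneg (hr0 m) hS0) (norm_nonneg (t M1 p))]
    -- positivity of ‖t M1 p‖
    have hM11 : 1 ≤ M1 := le_trans hM01 hM1M0
    have hM1N : 1 ≤ M1 * N := by
      have := Nat.mul_le_mul hM11 hN
      omega
    have hn1 : 1 ≤ M1*N+i := by omega
    have heq := Sdet_norm_eq a b ha N γ p.2 p.1 (M1*N+i) hn1
    have hqb := (hQbd (![gev a b p.2 p.1 (M1*N+i+N-1), gev a b p.2 p.1 (M1*N+i+N)])
      p.2 hp2 M1 hM1M0).1
    simp only [Matrix.cons_val_zero, Matrix.cons_val_one, Matrix.head_cons] at hqb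
    have hpair := gev_pair_ne a b ha p.2 p.1 (hΩ0 p.1 hp1) (M1*N+i+N) (by omega)
    have hnsqpos : 0 < ‖gev a b p.2 p.1 (M1*N+i+N-1)‖^2
        + ‖gev a b p.2 p.1 (M1*N+i+N)‖^2 := by
      rcases not_and_or.mp hpair with h | h
      · have h10 : 0 < ‖gev a b p.2 p.1 (M1*N+i+N-1)‖ := norm_pos_iff.mpr h
        nlinarith [sq_nonneg (‖gev a b p.2 p.1 (M1*N+i+N)‖)]
      · have h10 : 0 < ‖gev a b p.2 p.1 (M1*N+i+N)‖ := norm_pos_iff.mpr h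
        nlinarith [sq_nonneg (‖gev a b p.2 p.1 (M1*N+i+N-1)‖)]
    have hpos1 : 0 < ‖t M1 p‖ := by
      have h11 : 0 < ‖a (M1*N+i+N-1)‖ := norm_pos_iff.mpr (ha _)
      have h12 : 0 < ‖a (M1*N+i+N-1)‖ * (c₁ * (‖gev a b p.2 p.1 (M1*N+i+N-1)‖^2
          + ‖gev a b p.2 p.1 (M1*N+i+N)‖^2)) := by positivity
      have h13 : ‖a (M1*N+i+N-1)‖ * (c₁ * (‖gev a b p.2 p.1 (M1*N+i+N-1)‖^2
          + ‖gev a b p.2 p.1 (M1*N+i+N)‖^2)) ≤ ‖t M1 p‖ := by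
        simp only [ht]
        rw [heq]
        exact mul_le_mul_of_nonneg_left hqb (norm_nonneg _)
      linarith
    have hlim : Tendsto (fun m => ‖t m p‖) atTop (𝓝 ‖g p‖) :=
      (huni.tendsto_at ⟨hp1, hp2⟩).norm
    have hge : (1/2) * ‖t M1 p‖ ≤ ‖g p‖ := by
      apply ge_of_tendsto hlim
      rw [eventually_atTop]
      refine ⟨M1, fun m hm => ?_⟩
      have h1 := hlb m hm
      have h2 := htail m hm
      nlinarith [norm_nonneg (t M1 p)]
    linarith
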